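/- Let P_λ⃗ be the Pauli channel P_λ⃗(ρ) = λ_0 ρ + Σ_{k=1}^3 λ_k σ_k ρ σ_k on qubits, where λ⃗ is a probability vector and σ_1, σ_2, σ_3 are the Pauli matrices. For any binary discrimination game g = diag(g_0, 1−g_0) with 1/2 ≤ g_0 ≤ 1, U(P_λ⃗, g) = max( g_0, (1 + max_{k∈{1,2,3}} |2(λ_0 + λ_k) − 1|)/2 ). -/

import Mathlib

open Matrix Kronecker
open scoped ComplexOrder

noncomputable section

variable {n : Type*} [Fintype n] [DecidableEq n]

/-- A density operator: positive semidefinite with unit trace. -/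
def IsDensity (ρ : Matrix n n ℂ) : Prop := ρ.PosSemidef ∧ ρ.trace = 1

/-- A POVM: positive semidefinite effects summing to the identity. -/
def IsPOVM {m : ℕ} (π : Fin m → Matrix n n ℂ) : Prop :=
  (∀ y, (π y).PosSemidef) ∧ ∑ y, π y = 1

/-- The Choi matrix of a map on matrices. -/
def choi {p q : Type*} [Fintype p] [DecidableEq p] [Fintype q] [DecidableEq q]
    (Φ : Matrix p p ℂ → Matrix q q ℂ) : Matrix (p × q) (p × q) ℂ :=
  ∑ i, ∑ j, (Matrix.single i j (1 : ℂ)) ⊗ₖ (Φ (Matrix.single i j (1 : ℂ)))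

/-- Completely positive trace preserving linear map. -/
def IsCPTP {p q : Type*} [Fintype p] [DecidableEq p] [Fintype q] [DecidableEq q]
    (Φ : Matrix p p ℂ → Matrix q q ℂ) : Prop :=
  IsLinearMap ℂ Φ ∧ (choi Φ).PosSemidef ∧ ∀ ρ, (Φ ρ).trace = ρ.trace

/-- The average payoff of game `g`, channel `Φ`, encoding `ρ`, decoding `π`. -/
def payoff {p q : Type*} [Fintype p] [DecidableEq p] [Fintype q] [DecidableEq q]
    {nn m : ℕ} (g : Fin nn → Fin m → ℝ) (Φ : Matrix p p ℂ → Matrix q q ℂ)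
    (ρ : Fin nn → Matrix p p ℂ) (π : Fin m → Matrix q q ℂ) : ℝ :=
  ∑ x, ∑ y, ((Φ (ρ x) * π y).trace).re * g x y

/-- The communication utility of channel `Φ` for game `g`. -/
def utility {p q : Type*} [Fintype p] [DecidableEq p] [Fintype q] [DecidableEq q]
    {nn m : ℕ} (g : Fin nn → Fin m → ℝ) (Φ : Matrix p p ℂ → Matrix q q ℂ) : ℝ :=
  sSup {u : ℝ | ∃ ρ π, (∀ x, IsDensity (ρ x)) ∧ IsPOVM π ∧ u = payoff g Φ ρ π}

/-- The trace norm (sum of singular values). -/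
def traceNorm (A : Matrix n n ℂ) : ℝ :=
  ∑ i, Real.sqrt ((Matrix.posSemidef_conjTranspose_mul_self A).1.eigenvalues i)

/-- Helstrom utility of a channel for the binary discrimination game diag(g₀, 1-g₀). -/
def helstromUtility {p q : Type*} [Fintype p] [DecidableEq p] [Fintype q] [DecidableEq q]
    (Φ : Matrix p p ℂ → Matrix q q ℂ) (g₀ : ℝ) : ℝ :=
  sSup {u : ℝ | ∃ ρ₀ ρ₁, IsDensity ρ₀ ∧ IsDensity ρ₁ ∧
    u = (1 + traceNorm ((g₀ : ℂ) • Φ ρ₀ - ((1 - g₀ : ℝ) : ℂ) • Φ ρ₁)) / 2}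

/-! ### Auxiliary machinery for statement 10 -/

/-- The 2×2 Hermitian "Bloch" matrix `a·I + b⃗·σ⃗`. -/
def Mat (a b1 b2 b3 : ℝ) : Matrix (Fin 2) (Fin 2) ℂ :=
  !![((a + b3 : ℝ) : ℂ), (b1 : ℂ) - (b2 : ℂ) * Complex.I;
     (b1 : ℂ) + (b2 : ℂ) * Complex.I, ((a - b3 : ℝ) : ℂ)]

lemma herm_trace_eq {nn : Type*} [Fintype nn] [DecidableEq nn] {A : Matrix nn nn ℂ}
    (hA : A.IsHermitian) : A.trace = ∑ i, (hA.eigenvalues i : ℂ) := by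
  exact hA.trace_eq_sum_eigenvalues

lemma traceNorm_fin_two (A : Matrix (Fin 2) (Fin 2) ℂ) :
    traceNorm A = Real.sqrt ((Aᴴ * A).trace.re + 2 * Real.sqrt ((Aᴴ * A).det.re)) := by
  have hpsd := Matrix.posSemidef_conjTranspose_mul_self A
  set μ := hpsd.1.eigenvalues with hμ
  have h0 : 0 ≤ μ 0 := hpsd.eigenvalues_nonneg 0
  have h1 : 0 ≤ μ 1 := hpsd.eigenvalues_nonneg 1
  have htr : (Aᴴ * A).trace.re = μ 0 + μ 1 := by
    rw [herm_trace_eq hpsd.1, Fin.sum_univ_two]; simp [hμ]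
  have hdet : (Aᴴ * A).det.re = μ 0 * μ 1 := by
    rw [hpsd.1.det_eq_prod_eigenvalues, Fin.prod_univ_two]; simp [hμ]
  rw [traceNorm, Fin.sum_univ_two, htr, hdet]
  rw [Real.sqrt_mul h0,
    show μ 0 + μ 1 + 2 * (Real.sqrt (μ 0) * Real.sqrt (μ 1))
      = (Real.sqrt (μ 0) + Real.sqrt (μ 1))^2 by
        rw [add_sq, Real.sq_sqrt h0, Real.sq_sqrt h1]; ring,
    Real.sqrt_sq (by positivity)]

lemma Mat_conjTranspose (a b1 b2 b3 : ℝ) : (Mat a b1 b2 b3)ᴴ = Mat a b1 b2 b3 := by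
  ext i j
  fin_cases i <;> fin_cases j <;> simp [Mat, Complex.ext_iff]

lemma Mat_mul_self (a b1 b2 b3 : ℝ) :
    (Mat a b1 b2 b3)ᴴ * (Mat a b1 b2 b3) =
      !![((a+b3:ℝ):ℂ) * ((a+b3:ℝ):ℂ) + ((b1:ℂ) - (b2:ℂ)*Complex.I) * ((b1:ℂ) + (b2:ℂ)*Complex.I),
         ((a+b3:ℝ):ℂ) * ((b1:ℂ) - (b2:ℂ)*Complex.I) + ((b1:ℂ) - (b2:ℂ)*Complex.I) * ((a-b3:ℝ):ℂ);
         ((b1:ℂ) + (b2:ℂ)*Complex.I) * ((a+b3:ℝ):ℂ) + ((a-b3:ℝ):ℂ) * ((b1:ℂ) + (b2:ℂ)*Complex.I),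
         ((b1:ℂ) + (b2:ℂ)*Complex.I) * ((b1:ℂ) - (b2:ℂ)*Complex.I) + ((a-b3:ℝ):ℂ) * ((a-b3:ℝ):ℂ)] := by
  rw [Mat_conjTranspose]
  rw [show Mat a b1 b2 b3 = !![((a + b3 : ℝ) : ℂ), (b1 : ℂ) - (b2 : ℂ) * Complex.I;
     (b1 : ℂ) + (b2 : ℂ) * Complex.I, ((a - b3 : ℝ) : ℂ)] from rfl, Matrix.mul_fin_two]

lemma Mat_trace_re (a b1 b2 b3 : ℝ) :
    ((Mat a b1 b2 b3)ᴴ * (Mat a b1 b2 b3)).trace.re = 2*(a^2 + (b1^2+b2^2+b3^2)) := by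
  rw [Mat_mul_self, Matrix.trace_fin_two_of]
  simp [Complex.ext_iff, Complex.add_re, Complex.mul_re, Complex.mul_im]
  ring

lemma Mat_det_re (a b1 b2 b3 : ℝ) :
    ((Mat a b1 b2 b3)ᴴ * (Mat a b1 b2 b3)).det.re = (a^2 - (b1^2+b2^2+b3^2))^2 := by
  rw [Mat_mul_self, Matrix.det_fin_two_of]
  simp [Complex.ext_iff, Complex.add_re, Complex.mul_re, Complex.mul_im,
    Complex.sub_re, Complex.sub_im]
  ring

lemma sqrt_max_key (a B : ℝ) (ha : 0 ≤ a) (hB : 0 ≤ B) :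
    Real.sqrt (2*(a^2 + B) + 2 * Real.sqrt ((a^2 - B)^2)) = 2 * max a (Real.sqrt B) := by
  rw [Real.sqrt_sq_eq_abs]
  rcases le_total B (a^2) with h | h
  · rw [abs_of_nonneg (by linarith), show 2*(a^2+B) + 2*(a^2-B) = (2*a)^2 by ring,
      Real.sqrt_sq (by linarith)]
    rw [max_eq_left]
    nlinarith [Real.sq_sqrt hB, Real.sqrt_nonneg B]
  · rw [abs_of_nonpos (by linarith),
      show 2*(a^2+B) + 2*-(a^2-B) = (2*Real.sqrt B)^2 by
        rw [mul_pow, Real.sq_sqrt hB]; ring,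
      Real.sqrt_sq (by positivity)]
    rw [max_eq_right]
    nlinarith [Real.sq_sqrt hB, Real.sqrt_nonneg B]

lemma traceNorm_Mat (a b1 b2 b3 : ℝ) (ha : 0 ≤ a) :
    traceNorm (Mat a b1 b2 b3) = 2 * max a (Real.sqrt (b1^2+b2^2+b3^2)) := by
  rw [traceNorm_fin_two, Mat_trace_re, Mat_det_re, sqrt_max_key a _ ha (by positivity)]

lemma quadform (x y w : ℝ) (h : x^2 + y^2 + w^2 = 1/4) (v : Fin 2 → ℂ) :
    ((1/2 + w : ℝ) : ℂ) * dotProduct (star v) (Mat (1/2) x y w *ᵥ v) =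
      star (((1/2 + w : ℝ) : ℂ) * v 0 + ((x : ℂ) - (y:ℂ)*Complex.I) * v 1) *
        (((1/2 + w : ℝ) : ℂ) * v 0 + ((x : ℂ) - (y:ℂ)*Complex.I) * v 1) := by
  have hc2 : (x:ℂ)^2 + (y:ℂ)^2 + (w:ℂ)^2 = 1/4 := by
    have := congrArg (Complex.ofReal) h; push_cast at this; exact this
  simp [Mat, dotProduct, Matrix.mulVec, Fin.sum_univ_two, star_add, star_mul',
    Complex.star_def, Complex.conj_ofReal, Complex.conj_I]
  ring_nf
  linear_combination ((starRingEnd ℂ (v 1) * v 1)*(y:ℂ)^2) * Complex.I_sq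
    - (starRingEnd ℂ (v 1) * v 1) * hc2

lemma isDensity_Mat (x y w : ℝ) (h : x^2 + y^2 + w^2 = 1/4) :
    IsDensity (Mat (1/2) x y w) := by
  refine ⟨Matrix.PosSemidef.of_dotProduct_mulVec_nonneg ?_ ?_, ?_⟩
  · ext i j
    fin_cases i <;> fin_cases j <;> simp [Mat, Complex.ext_iff]
  · intro v
    rcases eq_or_lt_of_le (by nlinarith : -(1/2:ℝ) ≤ w) with hw | hw
    · have hx : x = 0 := by nlinarith
      have hy : y = 0 := by nlinarith
      have hQ : dotProduct (star v) (Mat (1/2) x y w *ᵥ v) = star (v 1) * v 1 := by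
        subst hx hy
        simp [Mat, ← hw, dotProduct, Matrix.mulVec, Fin.sum_univ_two, Complex.star_def]
        norm_num
      rw [hQ]; exact star_mul_self_nonneg _
    · have ha : (0:ℝ) < 1/2 + w := by linarith
      have hne : ((1/2 + w : ℝ) : ℂ) ≠ 0 := by
        exact_mod_cast ne_of_gt ha
      have hQ : dotProduct (star v) (Mat (1/2) x y w *ᵥ v) =
          (((1/2 + w : ℝ)⁻¹ : ℝ) : ℂ) *
            (star (((1/2 + w : ℝ) : ℂ) * v 0 + ((x : ℂ) - (y:ℂ)*Complex.I) * v 1) *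
              (((1/2 + w : ℝ) : ℂ) * v 0 + ((x : ℂ) - (y:ℂ)*Complex.I) * v 1)) := by
        calc dotProduct (star v) (Mat (1/2) x y w *ᵥ v)
            = (((1/2 + w : ℝ)⁻¹ : ℝ) : ℂ) *
              (((1/2 + w : ℝ) : ℂ) * dotProduct (star v) (Mat (1/2) x y w *ᵥ v)) := by
              rw [Complex.ofReal_inv, ← mul_assoc, inv_mul_cancel₀ hne, one_mul]
          _ = _ := by rw [quadform x y w h v]
      rw [hQ]
      exact mul_nonneg (by rw [Complex.zero_le_real]; positivity) (star_mul_self_nonneg _)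
  · simp [Mat, Matrix.trace_fin_two]
    norm_num

lemma density_bloch {ρ : Matrix (Fin 2) (Fin 2) ℂ} (h : IsDensity ρ) :
    ∃ x y w : ℝ, x^2 + y^2 + w^2 ≤ 1/4 ∧ ρ = Mat (1/2) x y w := by
  obtain ⟨hpsd, htr⟩ := h
  have hherm := hpsd.1
  have h00 : (ρ 0 0).im = 0 := by
    have := congrFun (congrFun hherm 0) 0
    simp only [Matrix.conjTranspose_apply, Complex.star_def] at this
    exact (Complex.conj_eq_iff_im.mp this)
  have h01 : (starRingEnd ℂ) (ρ 1 0) = ρ 0 1 := by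
    have := congrFun (congrFun hherm 0) 1
    simpa only [Matrix.conjTranspose_apply, Complex.star_def] using this
  rw [Matrix.trace_fin_two] at htr
  have htr_re : (ρ 0 0).re + (ρ 1 1).re = 1 := by
    have := congrArg Complex.re htr; simpa using this
  have htr_im : (ρ 0 0).im + (ρ 1 1).im = 0 := by
    have := congrArg Complex.im htr; simpa using this
  set x := (ρ 1 0).re
  set y := (ρ 1 0).im
  set w := (ρ 0 0).re - 1/2 with hw
  have hdet : 0 ≤ (ρ.det).re := by
    rw [hherm.det_eq_prod_eigenvalues, Fin.prod_univ_two]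
    have h0 := hpsd.eigenvalues_nonneg 0
    have h1 := hpsd.eigenvalues_nonneg 1
    simpa using mul_nonneg h0 h1
  rw [Matrix.det_fin_two] at hdet
  have hdet' : (ρ 0 0 * ρ 1 1 - ρ 0 1 * ρ 1 0).re = (ρ 0 0).re * (ρ 1 1).re - (x^2 + y^2) := by
    rw [← h01]
    simp [Complex.sub_re, Complex.mul_re, h00, Complex.conj_re, Complex.conj_im]
    ring
  refine ⟨x, y, w, ?_, ?_⟩
  · rw [hdet'] at hdet
    have h00re : (ρ 0 0).re = 1/2 + w := by rw [hw]; ring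
    have h11re : (ρ 1 1).re = 1/2 - w := by rw [hw]; linarith
    rw [h00re, h11re] at hdet
    nlinarith [hdet]
  · ext i j
    fin_cases i <;> fin_cases j <;>
      simp [Mat, Complex.ext_iff, ← h01] <;>
      constructor <;> linarith [h00, htr_re, htr_im]

lemma pauli_apply (l : Fin 4 → ℝ) (hs : l 0 + l 1 + l 2 + l 3 = 1)
    (P : Matrix (Fin 2) (Fin 2) ℂ → Matrix (Fin 2) (Fin 2) ℂ)
    (hP : ∀ ρ, P ρ = (l 0 : ℂ) • ρ
      + (l 1 : ℂ) • (!![0, 1; 1, 0] * ρ * !![0, 1; 1, 0])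
      + (l 2 : ℂ) • (!![0, -Complex.I; Complex.I, 0] * ρ * !![0, -Complex.I; Complex.I, 0])
      + (l 3 : ℂ) • (!![1, 0; 0, -1] * ρ * !![1, 0; 0, -1]))
    (x y w : ℝ) :
    P (Mat (1/2) x y w) = Mat (1/2) ((l 0 + l 1 - l 2 - l 3)*x)
      ((l 0 - l 1 + l 2 - l 3)*y) ((l 0 - l 1 - l 2 + l 3)*w) := by
  rw [hP]
  ext i j
  fin_cases i <;> fin_cases j <;>
    simp [Mat, Matrix.mul_apply, Fin.sum_univ_two, Complex.ext_iff, Complex.mul_re,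
      Complex.mul_im] <;>
    first | exact ⟨trivial, trivial⟩ | linarith | exact ⟨by linarith, by linarith⟩

lemma combo (g₀ p q r p' q' r' : ℝ) :
    (g₀ : ℂ) • Mat (1/2) p q r - ((1 - g₀ : ℝ) : ℂ) • Mat (1/2) p' q' r'
      = Mat (g₀ - 1/2) (g₀*p - (1-g₀)*p') (g₀*q - (1-g₀)*q') (g₀*r - (1-g₀)*r') := by
  ext i j
  fin_cases i <;> fin_cases j <;>
    simp [Mat, Complex.ext_iff, Complex.mul_re, Complex.mul_im] <;> ring

set_option maxHeartbeats 1000000 in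
lemma bloch_bound (g₀ x y w x' y' w' : ℝ) (hg0 : 1/2 ≤ g₀) (hg1 : g₀ ≤ 1)
    (hu : x^2+y^2+w^2 ≤ 1/4) (hv : x'^2+y'^2+w'^2 ≤ 1/4) :
    (g₀*x-(1-g₀)*x')^2 + (g₀*y-(1-g₀)*y')^2 + (g₀*w-(1-g₀)*w')^2 ≤ 1/4 := by
  have hCS : (x*x'+y*y'+w*w')^2 ≤ (x^2+y^2+w^2)*(x'^2+y'^2+w'^2) := by
    nlinarith [sq_nonneg (x*y'-y*x'), sq_nonneg (x*w'-w*x'), sq_nonneg (y*w'-w*y')]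
  have hA0 : (0:ℝ) ≤ x^2+y^2+w^2 := by positivity
  have hB0 : (0:ℝ) ≤ x'^2+y'^2+w'^2 := by positivity
  have hAB : (x^2+y^2+w^2)*(x'^2+y'^2+w'^2) ≤ 1/16 := by nlinarith [hu, hv, hA0, hB0]
  have hC2 : (x*x'+y*y'+w*w')^2 ≤ 1/16 := le_trans hCS hAB
  have hC : -(1/4) ≤ x*x'+y*y'+w*w' := by nlinarith [hC2, sq_nonneg (x*x'+y*y'+w*w'+1/4)]
  have hgp : 0 ≤ g₀*(1-g₀) := by nlinarith
  have t1 : g₀^2*(x^2+y^2+w^2) ≤ g₀^2*(1/4) :=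
    mul_le_mul_of_nonneg_left hu (sq_nonneg g₀)
  have t2 : (1-g₀)^2*(x'^2+y'^2+w'^2) ≤ (1-g₀)^2*(1/4) :=
    mul_le_mul_of_nonneg_left hv (sq_nonneg (1-g₀))
  have t3 : -(2*(g₀*(1-g₀))*(x*x'+y*y'+w*w')) ≤ 2*(g₀*(1-g₀))*(1/4) := by nlinarith [hgp, hC]
  nlinarith [t1, t2, t3]

lemma maxhalf (g₀ m : ℝ) : (1 + 2 * max (g₀ - 1/2) (m/2))/2 = max g₀ ((1+m)/2) := by
  rcases le_total (g₀ - 1/2) (m/2) with h | h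
  · rw [max_eq_right h, max_eq_right (by linarith)]; ring
  · rw [max_eq_left h, max_eq_left (by linarith)]; ring

set_option maxHeartbeats 2000000 in
/-- binary discrimination utility of the Pauli channel. -/
theorem stmt10 (l : Fin 4 → ℝ) (hl : ∀ k, 0 ≤ l k) (hsum : ∑ k, l k = 1)
    (g₀ : ℝ) (hg0 : 1 / 2 ≤ g₀) (hg1 : g₀ ≤ 1)
    (P : Matrix (Fin 2) (Fin 2) ℂ → Matrix (Fin 2) (Fin 2) ℂ)
    (hP : ∀ ρ, P ρ = (l 0 : ℂ) • ρ
      + (l 1 : ℂ) • (!![0, 1; 1, 0] * ρ * !![0, 1; 1, 0])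
      + (l 2 : ℂ) • (!![0, -Complex.I; Complex.I, 0] * ρ * !![0, -Complex.I; Complex.I, 0])
      + (l 3 : ℂ) • (!![1, 0; 0, -1] * ρ * !![1, 0; 0, -1])) :
    helstromUtility P g₀
      = max g₀ ((1 + max |2 * (l 0 + l 1) - 1|
          (max |2 * (l 0 + l 2) - 1| |2 * (l 0 + l 3) - 1|)) / 2) := by
  have hs : l 0 + l 1 + l 2 + l 3 = 1 := by
    rw [Fin.sum_univ_four] at hsum; exact hsum
  set c1 := l 0 + l 1 - l 2 - l 3 with hc1
  set c2 := l 0 - l 1 + l 2 - l 3 with hc2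
  set c3 := l 0 - l 1 - l 2 + l 3 with hc3
  have habs1 : |2 * (l 0 + l 1) - 1| = |c1| := by rw [hc1]; congr 1; linarith
  have habs2 : |2 * (l 0 + l 2) - 1| = |c2| := by rw [hc2]; congr 1; linarith
  have habs3 : |2 * (l 0 + l 3) - 1| = |c3| := by rw [hc3]; congr 1; linarith
  rw [habs1, habs2, habs3]
  set m := max |c1| (max |c2| |c3|) with hm
  have hm0 : 0 ≤ m := le_trans (abs_nonneg c1) (le_max_left _ _)
  have ha0 : (0:ℝ) ≤ g₀ - 1/2 := by linarith
  -- upper bound for all elements of the set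
  have hub : ∀ u ∈ {u : ℝ | ∃ ρ₀ ρ₁, IsDensity ρ₀ ∧ IsDensity ρ₁ ∧
      u = (1 + traceNorm ((g₀ : ℂ) • P ρ₀ - ((1 - g₀ : ℝ) : ℂ) • P ρ₁)) / 2},
      u ≤ max g₀ ((1+m)/2) := by
    rintro u ⟨ρ₀, ρ₁, hd₀, hd₁, rfl⟩
    obtain ⟨x, y, w, hxyw, rfl⟩ := density_bloch hd₀
    obtain ⟨x', y', w', hxyw', rfl⟩ := density_bloch hd₁
    rw [pauli_apply l hs P hP, pauli_apply l hs P hP, combo, traceNorm_Mat _ _ _ _ ha0]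
    set t1 := g₀*(c1*x) - (1-g₀)*(c1*x') with ht1
    set t2 := g₀*(c2*y) - (1-g₀)*(c2*y') with ht2
    set t3 := g₀*(c3*w) - (1-g₀)*(c3*w') with ht3
    have sqle : ∀ c : ℝ, |c| ≤ m → c^2 ≤ m^2 := fun c hc => by
      calc c^2 = |c|^2 := (sq_abs c).symm
        _ ≤ m^2 := pow_le_pow_left₀ (abs_nonneg c) hc 2
    have hc1m : c1^2 ≤ m^2 := sqle c1 (le_max_left _ _)
    have hc2m : c2^2 ≤ m^2 :=
      sqle c2 (le_trans (le_max_left |c2| |c3|) (le_max_right |c1| (max |c2| |c3|)))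
    have hc3m : c3^2 ≤ m^2 :=
      sqle c3 (le_trans (le_max_right |c2| |c3|) (le_max_right |c1| (max |c2| |c3|)))
    have hbb := bloch_bound g₀ x y w x' y' w' hg0 hg1 hxyw hxyw'
    have hSle : t1^2 + t2^2 + t3^2 ≤ (m/2)^2 := by
      have b1 : t1^2 ≤ m^2 * (g₀*x - (1-g₀)*x')^2 := by
        rw [ht1, show (g₀*(c1*x) - (1-g₀)*(c1*x'))^2 = c1^2 * (g₀*x - (1-g₀)*x')^2 by ring]
        exact mul_le_mul_of_nonneg_right hc1m (sq_nonneg _)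
      have b2 : t2^2 ≤ m^2 * (g₀*y - (1-g₀)*y')^2 := by
        rw [ht2, show (g₀*(c2*y) - (1-g₀)*(c2*y'))^2 = c2^2 * (g₀*y - (1-g₀)*y')^2 by ring]
        exact mul_le_mul_of_nonneg_right hc2m (sq_nonneg _)
      have b3 : t3^2 ≤ m^2 * (g₀*w - (1-g₀)*w')^2 := by
        rw [ht3, show (g₀*(c3*w) - (1-g₀)*(c3*w'))^2 = c3^2 * (g₀*w - (1-g₀)*w')^2 by ring]
        exact mul_le_mul_of_nonneg_right hc3m (sq_nonneg _)
      calc t1^2 + t2^2 + t3^2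
          ≤ m^2 * (g₀*x - (1-g₀)*x')^2 + m^2 * (g₀*y - (1-g₀)*y')^2
            + m^2 * (g₀*w - (1-g₀)*w')^2 := by linarith
        _ = m^2 * ((g₀*x-(1-g₀)*x')^2 + (g₀*y-(1-g₀)*y')^2 + (g₀*w-(1-g₀)*w')^2) := by ring
        _ ≤ m^2 * (1/4) := mul_le_mul_of_nonneg_left hbb (sq_nonneg m)
        _ = (m/2)^2 := by ring
    have hsq : Real.sqrt (t1^2 + t2^2 + t3^2) ≤ m/2 := by
      calc Real.sqrt (t1^2 + t2^2 + t3^2) ≤ Real.sqrt ((m/2)^2) := Real.sqrt_le_sqrt hSle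
        _ = m/2 := Real.sqrt_sq (by linarith)
    have : max (g₀ - 1/2) (Real.sqrt (t1^2+t2^2+t3^2)) ≤ max (g₀ - 1/2) (m/2) :=
      max_le_max le_rfl hsq
    rw [← maxhalf g₀ m]
    have h2 : (2:ℝ) * max (g₀ - 1/2) (Real.sqrt (t1^2+t2^2+t3^2))
        ≤ 2 * max (g₀ - 1/2) (m/2) := by linarith
    linarith
  -- the witness achieving the bound
  have hwit : ∃ ρ₀ ρ₁, IsDensity ρ₀ ∧ IsDensity ρ₁ ∧
      max g₀ ((1+m)/2)
        = (1 + traceNorm ((g₀ : ℂ) • P ρ₀ - ((1 - g₀ : ℝ) : ℂ) • P ρ₁)) / 2 := by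
    -- pick the coordinate achieving the max
    have key : ∀ xw yw ww : ℝ, xw^2 + yw^2 + ww^2 = 1/4 →
        (c1*xw)^2 + (c2*yw)^2 + (c3*ww)^2 = (m/2)^2 →
        max g₀ ((1+m)/2)
          = (1 + traceNorm ((g₀ : ℂ) • P (Mat (1/2) xw yw ww)
              - ((1 - g₀ : ℝ) : ℂ) • P (Mat (1/2) (-xw) (-yw) (-ww)))) / 2 := by
      intro xw yw ww hnorm hval
      refine Eq.symm ?_
      rw [pauli_apply l hs P hP, pauli_apply l hs P hP, combo, traceNorm_Mat _ _ _ _ ha0]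
      have e1 : g₀*(c1*xw) - (1-g₀)*(c1*(-xw)) = c1*xw := by ring
      have e2 : g₀*(c2*yw) - (1-g₀)*(c2*(-yw)) = c2*yw := by ring
      have e3 : g₀*(c3*ww) - (1-g₀)*(c3*(-ww)) = c3*ww := by ring
      rw [e1, e2, e3, hval, Real.sqrt_sq (by linarith), maxhalf]
    rcases le_total (max |c2| |c3|) |c1| with h1 | h1
    · refine ⟨Mat (1/2) (1/2) 0 0, Mat (1/2) (-(1/2)) 0 0,
        isDensity_Mat _ _ _ (by norm_num), isDensity_Mat _ _ _ (by norm_num), ?_⟩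
      have := key (1/2) 0 0 (by norm_num) ?_
      · simpa using this
      · have hmeq : m = |c1| := max_eq_left h1
        rw [hmeq, show (|c1|/2)^2 = c1^2/4 by rw [div_pow, sq_abs]; norm_num]
        ring
    · rcases le_total |c3| |c2| with h2 | h2
      · refine ⟨Mat (1/2) 0 (1/2) 0, Mat (1/2) 0 (-(1/2)) 0,
          isDensity_Mat _ _ _ (by norm_num), isDensity_Mat _ _ _ (by norm_num), ?_⟩
        have hmeq : m = |c2| := by
          rw [hm, max_eq_right h1, max_eq_left h2]
        have := key 0 (1/2) 0 (by norm_num) ?_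
        · simpa using this
        · rw [hmeq]
          rw [show (|c2|/2)^2 = c2^2/4 by rw [div_pow, sq_abs]; norm_num]
          ring
      · refine ⟨Mat (1/2) 0 0 (1/2), Mat (1/2) 0 0 (-(1/2)),
          isDensity_Mat _ _ _ (by norm_num), isDensity_Mat _ _ _ (by norm_num), ?_⟩
        have hmeq : m = |c3| := by
          rw [hm, max_eq_right h1, max_eq_right h2]
        have := key 0 0 (1/2) (by norm_num) ?_
        · simpa using this
        · rw [hmeq]
          rw [show (|c3|/2)^2 = c3^2/4 by rw [div_pow, sq_abs]; norm_num]
          ring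
  obtain ⟨ρ₀, ρ₁, hd₀, hd₁, hval⟩ := hwit
  have hmem : max g₀ ((1+m)/2) ∈ {u : ℝ | ∃ ρ₀ ρ₁, IsDensity ρ₀ ∧ IsDensity ρ₁ ∧
      u = (1 + traceNorm ((g₀ : ℂ) • P ρ₀ - ((1 - g₀ : ℝ) : ℂ) • P ρ₁)) / 2} :=
    ⟨ρ₀, ρ₁, hd₀, hd₁, hval⟩
  exact IsGreatest.csSup_eq ⟨hmem, hub⟩

end
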